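/- Let φ : [0,1] → [0,1] be the tent map, φ(x) = 2x for x ∈ [0,1/2] and φ(x) = 2 − 2x for x ∈ (1/2,1], and let ℓ be Lebesgue measure on [0,1]. Define P : L¹([0,1]) → L¹([0,1]) by Pf(x) = (1/2) f(x/2) + (1/2) f(1 − x/2). Then P is the Frobenius–Perron operator of φ, i.e. ∫_A Pf dℓ = ∫_{φ⁻¹(A)} f dℓ for every Borel set A ⊆ [0,1] and every f ∈ L¹([0,1]); the constant function f* = 1_{[0,1]} satisfies Pf* = f*; and for every density f ∈ L¹([0,1]), lim_{n→∞} ‖Pⁿf − 1_{[0,1]}‖₁ = 0. -/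

import Mathlib

open MeasureTheory Filter

/-- A density: a nonnegative element of `L¹` of norm one. -/
def IsDensity {X : Type*} [MeasurableSpace X] (m : Measure X) (f : Lp ℝ 1 m) : Prop :=
  0 ≤ f ∧ ‖f‖ = 1

section TentAux

open Set Metric
open scoped ENNReal NNReal

noncomputable section

def μ0 : Measure ℝ := volume.restrict (Set.Icc (0:ℝ) 1)

lemma μ0_def : μ0 = volume.restrict (Set.Icc (0:ℝ) 1) := rfl

def ψ : ℝ → ℝ := fun x => if x ≤ 1/2 then 2 * x else 2 - 2 * x

lemma μ0_univ : μ0 Set.univ = 1 := by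
  simp [μ0, Real.volume_Icc]

instance : IsProbabilityMeasure μ0 := ⟨μ0_univ⟩

lemma map_affine (c d : ℝ) (hc : c ≠ 0) :
    Measure.map (fun x => c * x + d) volume = ENNReal.ofReal |c⁻¹| • volume := by
  have h1 : (fun x : ℝ => c * x + d) = (fun y => y + d) ∘ (fun x => c * x) := rfl
  rw [h1, ← Measure.map_map (measurable_add_const d) (measurable_const_mul c),
    Real.map_volume_mul_left hc, Measure.map_smul, map_add_right_eq_self]

lemma T1_eq : (fun x : ℝ => x / 2) = fun x => (1/2 : ℝ) * x + 0 := by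
  funext x; ring

lemma T2_eq : (fun x : ℝ => 1 - x / 2) = fun x => (-(1/2) : ℝ) * x + 1 := by
  funext x; ring

lemma map_T1 : μ0.map (fun x => x / 2) =
    ENNReal.ofReal 2 • volume.restrict (Set.Icc (0:ℝ) (1/2)) := by
  have hpre : (fun x : ℝ => x / 2) ⁻¹' Set.Icc (0:ℝ) (1/2) = Set.Icc (0:ℝ) 1 := by
    ext x; simp only [Set.mem_preimage, Set.mem_Icc]; constructor <;> intro h <;>
      constructor <;> linarith [h.1, h.2]
  have hmeas : Measurable (fun x : ℝ => x / 2) := by fun_prop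
  rw [μ0, ← hpre, ← Measure.restrict_map hmeas measurableSet_Icc, T1_eq,
    map_affine _ _ (by norm_num), Measure.restrict_smul]
  norm_num

lemma map_T2 : μ0.map (fun x => 1 - x / 2) =
    ENNReal.ofReal 2 • volume.restrict (Set.Icc (1/2 : ℝ) 1) := by
  have hpre : (fun x : ℝ => 1 - x / 2) ⁻¹' Set.Icc (1/2:ℝ) 1 = Set.Icc (0:ℝ) 1 := by
    ext x; simp only [Set.mem_preimage, Set.mem_Icc]; constructor <;> intro h <;>
      constructor <;> linarith [h.1, h.2]
  have hmeas : Measurable (fun x : ℝ => 1 - x / 2) := by fun_prop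
  rw [μ0, ← hpre, ← Measure.restrict_map hmeas measurableSet_Icc, T2_eq,
    map_affine _ _ (by norm_num), Measure.restrict_smul]
  norm_num


lemma nu1_le : volume.restrict (Set.Icc (0:ℝ) (1/2)) ≤ μ0 :=
  Measure.restrict_mono (Set.Icc_subset_Icc le_rfl (by norm_num)) le_rfl

lemma nu2_le : volume.restrict (Set.Icc (1/2:ℝ) 1) ≤ μ0 :=
  Measure.restrict_mono (Set.Icc_subset_Icc (by norm_num) le_rfl) le_rfl

lemma asm_map_T1 {g : ℝ → ℝ} (hg : AEStronglyMeasurable g (volume.restrict (Set.Icc (0:ℝ) (1/2)))) :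
    AEStronglyMeasurable g (μ0.map (fun x => x / 2)) := by
  rw [map_T1]
  exact AEStronglyMeasurable.mono_ac (Measure.absolutelyContinuous_of_le_smul le_rfl) hg

lemma asm_map_T2 {g : ℝ → ℝ} (hg : AEStronglyMeasurable g (volume.restrict (Set.Icc (1/2:ℝ) 1))) :
    AEStronglyMeasurable g (μ0.map (fun x => 1 - x / 2)) := by
  rw [map_T2]
  exact AEStronglyMeasurable.mono_ac (Measure.absolutelyContinuous_of_le_smul le_rfl) hg

lemma integrable_comp_T1 {g : ℝ → ℝ} (hg : Integrable g μ0) :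
    Integrable (fun x => g (x / 2)) μ0 := by
  have h1 : Integrable g (volume.restrict (Set.Icc (0:ℝ) (1/2))) := hg.mono_measure nu1_le
  have h2 : Integrable g (μ0.map (fun x => x / 2)) := by
    rw [map_T1]
    exact h1.smul_measure (by norm_num)
  exact (integrable_map_measure (asm_map_T1 h1.aestronglyMeasurable)
    (by fun_prop)).mp h2

lemma integrable_comp_T2 {g : ℝ → ℝ} (hg : Integrable g μ0) :
    Integrable (fun x => g (1 - x / 2)) μ0 := by
  have h1 : Integrable g (volume.restrict (Set.Icc (1/2:ℝ) 1)) := hg.mono_measure nu2_le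
  have h2 : Integrable g (μ0.map (fun x => 1 - x / 2)) := by
    rw [map_T2]
    exact h1.smul_measure (by norm_num)
  exact (integrable_map_measure (asm_map_T2 h1.aestronglyMeasurable)
    (by fun_prop)).mp h2

lemma integral_comp_T1 {g : ℝ → ℝ}
    (hg : AEStronglyMeasurable g (volume.restrict (Set.Icc (0:ℝ) (1/2)))) :
    ∫ x, g (x / 2) ∂μ0 = 2 * ∫ y in Set.Icc (0:ℝ) (1/2), g y := by
  rw [← integral_map (by fun_prop : AEMeasurable (fun x : ℝ => x / 2) μ0) (asm_map_T1 hg),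
    map_T1, integral_smul_measure]
  norm_num

lemma integral_comp_T2 {g : ℝ → ℝ}
    (hg : AEStronglyMeasurable g (volume.restrict (Set.Icc (1/2:ℝ) 1))) :
    ∫ x, g (1 - x / 2) ∂μ0 = 2 * ∫ y in Set.Icc (1/2:ℝ) 1, g y := by
  rw [← integral_map (by fun_prop : AEMeasurable (fun x : ℝ => 1 - x / 2) μ0) (asm_map_T2 hg),
    map_T2, integral_smul_measure]
  norm_num


lemma core {g : ℝ → ℝ} (hg : Integrable g μ0) {A : Set ℝ} (hA : MeasurableSet A) :
    ∫ x in A, ((1/2) * g (x/2) + (1/2) * g (1 - x/2)) ∂μ0 = ∫ x in ψ ⁻¹' A, g x ∂μ0 := by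
  set B : Set ℝ := (fun y : ℝ => 2 * y) ⁻¹' A with hBdef
  set C : Set ℝ := (fun y : ℝ => 2 - 2 * y) ⁻¹' A with hCdef
  have hB : MeasurableSet B := hA.preimage (by fun_prop)
  have hC : MeasurableSet C := hA.preimage (by fun_prop)
  have hgB : Integrable (B.indicator g) μ0 := hg.indicator hB
  have hgC : Integrable (C.indicator g) μ0 := hg.indicator hC
  -- two indicator identities
  have key1 : A.indicator (fun x => (1/2) * g (x/2)) =
      fun x => (1/2) * (B.indicator g) (x/2) := by
    funext x
    by_cases hx : x ∈ A
    · have hx2 : x/2 ∈ B := by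
        simp only [hBdef, Set.mem_preimage]
        have h : 2 * (x/2) = x := by ring
        rw [h]; exact hx
      simp [Set.indicator_of_mem, hx, hx2]
    · have hx2 : x/2 ∉ B := by
        simp only [hBdef, Set.mem_preimage]
        have h : 2 * (x/2) = x := by ring
        rw [h]; exact hx
      simp [Set.indicator_of_notMem, hx, hx2]
  have key2 : A.indicator (fun x => (1/2) * g (1 - x/2)) =
      fun x => (1/2) * (C.indicator g) (1 - x/2) := by
    funext x
    by_cases hx : x ∈ A
    · have hx2 : 1 - x/2 ∈ C := by
        simp only [hCdef, Set.mem_preimage]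
        have : 2 - 2 * (1 - x/2) = x := by ring
        rw [this]; exact hx
      simp [Set.indicator_of_mem, hx, hx2]
    · have hx2 : 1 - x/2 ∉ C := by
        simp only [hCdef, Set.mem_preimage]
        have : 2 - 2 * (1 - x/2) = x := by ring
        rw [this]; exact hx
      simp [Set.indicator_of_notMem, hx, hx2]
  -- integrability of the two summands
  have hI1 : Integrable (fun x => (1/2 : ℝ) * g (x/2)) μ0 := (integrable_comp_T1 hg).const_mul _
  have hI2 : Integrable (fun x => (1/2 : ℝ) * g (1 - x/2)) μ0 :=
    (integrable_comp_T2 hg).const_mul _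
  have hL : ∫ x in A, ((1/2) * g (x/2) + (1/2) * g (1 - x/2)) ∂μ0
      = ∫ x in A, (1/2) * g (x/2) ∂μ0 + ∫ x in A, (1/2) * g (1 - x/2) ∂μ0 :=
    integral_add hI1.integrableOn hI2.integrableOn
  have hBg1 : AEStronglyMeasurable (B.indicator g) (volume.restrict (Set.Icc (0:ℝ) (1/2))) :=
    (hgB.mono_measure nu1_le).aestronglyMeasurable
  have hCg1 : AEStronglyMeasurable (C.indicator g) (volume.restrict (Set.Icc (1/2:ℝ) 1)) :=
    (hgC.mono_measure nu2_le).aestronglyMeasurable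
  have t1 : ∫ x in A, (1/2 : ℝ) * g (x/2) ∂μ0
      = ∫ y in B, g y ∂(volume.restrict (Set.Icc (0:ℝ) (1/2))) := by
    rw [← integral_indicator hA, key1, integral_const_mul, integral_comp_T1 hBg1,
      integral_indicator hB]
    ring
  have t2 : ∫ x in A, (1/2 : ℝ) * g (1 - x/2) ∂μ0
      = ∫ y in C, g y ∂(volume.restrict (Set.Icc (1/2:ℝ) 1)) := by
    rw [← integral_indicator hA, key2, integral_const_mul, integral_comp_T2 hCg1,
      integral_indicator hC]
    ring
  -- split the right-hand side
  have hψm : Measurable ψ := by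
    apply Measurable.ite (measurableSet_le measurable_id measurable_const) <;> fun_prop
  have hsets : ψ ⁻¹' A = (ψ ⁻¹' A ∩ Set.Iic (1/2)) ∪ (ψ ⁻¹' A ∩ Set.Ioi (1/2)) := by
    rw [← Set.inter_union_distrib_left, Set.Iic_union_Ioi, Set.inter_univ]
  have hdisj : Disjoint (ψ ⁻¹' A ∩ Set.Iic (1/2 : ℝ)) (ψ ⁻¹' A ∩ Set.Ioi (1/2)) :=
    (Set.Iic_disjoint_Ioi le_rfl).mono Set.inter_subset_right Set.inter_subset_right
  have hR : ∫ x in ψ ⁻¹' A, g x ∂μ0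
      = ∫ x in ψ ⁻¹' A ∩ Set.Iic (1/2), g x ∂μ0 + ∫ x in ψ ⁻¹' A ∩ Set.Ioi (1/2), g x ∂μ0 := by
    nth_rewrite 1 [hsets]
    exact setIntegral_union hdisj ((hA.preimage hψm).inter measurableSet_Ioi)
      hg.integrableOn hg.integrableOn
  have e1 : ψ ⁻¹' A ∩ Set.Iic (1/2 : ℝ) = B ∩ Set.Iic (1/2) := by
    ext x
    simp only [ψ, hBdef, Set.mem_inter_iff, Set.mem_preimage, Set.mem_Iic]
    by_cases hx : x ≤ 1/2
    · rw [if_pos hx]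
    · constructor <;> rintro ⟨-, h⟩ <;> exact absurd h hx
  have e2 : ψ ⁻¹' A ∩ Set.Ioi (1/2 : ℝ) = C ∩ Set.Ioi (1/2) := by
    ext x
    simp only [ψ, hCdef, Set.mem_inter_iff, Set.mem_preimage, Set.mem_Ioi]
    by_cases hx : x ≤ 1/2
    · constructor <;> rintro ⟨-, h⟩ <;> exact absurd hx (not_le.mpr h)
    · rw [if_neg hx]
  have μ0def : μ0 = volume.restrict (Set.Icc (0:ℝ) 1) := rfl
  have m1 : ∫ x in B ∩ Set.Iic (1/2 : ℝ), g x ∂μ0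
      = ∫ y in B, g y ∂(volume.restrict (Set.Icc (0:ℝ) (1/2))) := by
    have hseteq : B ∩ Set.Iic (1/2:ℝ) ∩ Set.Icc (0:ℝ) 1 = B ∩ Set.Icc (0:ℝ) (1/2) := by
      ext x
      simp only [Set.mem_inter_iff, Set.mem_Iic, Set.mem_Icc]
      constructor
      · rintro ⟨⟨h1, h2⟩, h3, h4⟩; exact ⟨h1, h3, h2⟩
      · rintro ⟨h1, h2, h3⟩; exact ⟨⟨h1, h3⟩, h2, by linarith⟩
    rw [μ0def, Measure.restrict_restrict (hB.inter measurableSet_Iic), hseteq,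
      Measure.restrict_restrict hB]
  have m2 : ∫ x in C ∩ Set.Ioi (1/2 : ℝ), g x ∂μ0
      = ∫ y in C, g y ∂(volume.restrict (Set.Icc (1/2:ℝ) 1)) := by
    have h1 : C ∩ Set.Ioi (1/2:ℝ) ∩ Set.Icc (0:ℝ) 1 = C ∩ Set.Ioc (1/2:ℝ) 1 := by
      ext x
      simp only [Set.mem_inter_iff, Set.mem_Ioi, Set.mem_Icc, Set.mem_Ioc]
      constructor
      · rintro ⟨⟨h1, h2⟩, h3, h4⟩; exact ⟨h1, h2, h4⟩
      · rintro ⟨h1, h2, h3⟩; exact ⟨⟨h1, h2⟩, by linarith, h3⟩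
    have hae : (C ∩ Set.Ioc (1/2:ℝ) 1 : Set ℝ) =ᵐ[volume] (C ∩ Set.Icc (1/2:ℝ) 1 : Set ℝ) :=
      ae_eq_set_inter EventuallyEq.rfl Ioc_ae_eq_Icc
    rw [μ0def, Measure.restrict_restrict (hC.inter measurableSet_Ioi), h1,
      Measure.restrict_restrict hC]
    exact setIntegral_congr_set hae
  rw [hL, t1, t2, hR, e1, e2, m1, m2]


lemma ψ_meas : Measurable ψ := by
  apply Measurable.ite (measurableSet_le measurable_id measurable_const) <;> fun_prop


/-- The transfer operator on plain functions. -/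
def Qop (g : ℝ → ℝ) : ℝ → ℝ := fun x => (1/2) * g (x/2) + (1/2) * g (1 - x/2)

lemma continuous_Qop {g : ℝ → ℝ} (hg : Continuous g) : Continuous (Qop g) :=
  (continuous_const.mul (hg.comp (continuous_id.div_const 2))).add
    (continuous_const.mul (hg.comp (continuous_const.sub (continuous_id.div_const 2))))

lemma integrable_of_continuous {g : ℝ → ℝ} (hg : Continuous g) : Integrable g μ0 := by
  rw [μ0_def]; exact hg.integrableOn_Icc

lemma Qop_lipschitz {K : ℝ≥0} {g : ℝ → ℝ} (hg : LipschitzWith K g) :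
    LipschitzWith (K/2) (Qop g) := by
  apply LipschitzWith.of_dist_le_mul
  intro x y
  have h1 := hg.dist_le_mul (x/2) (y/2)
  have h2 := hg.dist_le_mul (1 - x/2) (1 - y/2)
  simp only [Real.dist_eq] at h1 h2 ⊢
  have e1 : |x/2 - y/2| = |x - y|/2 := by
    have h : x/2 - y/2 = (x-y)/2 := by ring
    rw [h, abs_div]; norm_num
  have e2 : |1 - x/2 - (1 - y/2)| = |x - y|/2 := by
    have h : 1 - x/2 - (1 - y/2) = -((x-y)/2) := by ring
    rw [h, abs_neg, abs_div]; norm_num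
  have e3 : Qop g x - Qop g y
      = (1/2)*(g (x/2) - g (y/2)) + (1/2)*(g (1-x/2) - g (1-y/2)) := by
    unfold Qop; ring
  have hK : ((K/2 : ℝ≥0) : ℝ) = (K:ℝ)/2 := by push_cast; ring
  rw [e1] at h1
  rw [e2] at h2
  rw [e3, hK]
  calc |(1/2)*(g (x/2) - g (y/2)) + (1/2)*(g (1-x/2) - g (1-y/2))|
      ≤ |(1/2)*(g (x/2) - g (y/2))| + |(1/2)*(g (1-x/2) - g (1-y/2))| := abs_add_le _ _
    _ = (1/2)*|g (x/2) - g (y/2)| + (1/2)*|g (1-x/2) - g (1-y/2)| := by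
        rw [abs_mul, abs_mul, abs_of_pos (by norm_num : (0:ℝ) < 1/2)]
    _ ≤ (K:ℝ)/2 * |x-y| := by linarith

lemma integral_Qop {g : ℝ → ℝ} (hgint : Integrable g μ0) :
    ∫ x, Qop g x ∂μ0 = ∫ x, g x ∂μ0 := by
  have h := core hgint MeasurableSet.univ
  rw [Set.preimage_univ, Measure.restrict_univ] at h
  exact h

lemma lip_dist_mean {K : ℝ≥0} {g : ℝ → ℝ} (hg : LipschitzWith K g) {x : ℝ}
    (hx : x ∈ Set.Icc (0:ℝ) 1) :
    |g x - ∫ y, g y ∂μ0| ≤ K := by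
  have hgint : Integrable g μ0 := integrable_of_continuous hg.continuous
  have h0 : g x - ∫ y, g y ∂μ0 = ∫ y, (g x - g y) ∂μ0 := by
    rw [integral_sub (integrable_const _) hgint, integral_const]
    simp
  have hae : ∀ᵐ y ∂μ0, ‖g x - g y‖ ≤ (K:ℝ) := by
    have hmem : ∀ᵐ y ∂μ0, y ∈ Set.Icc (0:ℝ) 1 := by
      rw [μ0_def]; exact ae_restrict_mem measurableSet_Icc
    refine hmem.mono fun y hy => ?_
    have hd := hg.dist_le_mul x y
    rw [Real.dist_eq, Real.dist_eq] at hd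
    have hxy : |x - y| ≤ 1 := by
      rw [abs_le]; constructor <;> [linarith [hx.1, hy.2]; linarith [hx.2, hy.1]]
    calc ‖g x - g y‖ = |g x - g y| := Real.norm_eq_abs _
      _ ≤ (K:ℝ) * |x - y| := hd
      _ ≤ (K:ℝ) * 1 := by
          exact mul_le_mul_of_nonneg_left hxy K.coe_nonneg
      _ = (K:ℝ) := mul_one _
  calc |g x - ∫ y, g y ∂μ0| = ‖∫ y, (g x - g y) ∂μ0‖ := by rw [h0, Real.norm_eq_abs]
    _ ≤ (K:ℝ) * (μ0 Set.univ).toReal := norm_integral_le_of_norm_le_const hae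
    _ = (K:ℝ) := by rw [μ0_univ]; simp

lemma norm_le_of_ae_bound' {u : Lp ℝ 1 μ0} {C : ℝ} (hC : 0 ≤ C)
    (hu : ∀ᵐ x ∂μ0, ‖(u : ℝ → ℝ) x‖ ≤ C) : ‖u‖ ≤ C := by
  have h := Lp.norm_le_of_ae_bound hC hu
  simpa [measureUnivNNReal, μ0_univ] using h


lemma indicator_approx (c : ℝ) {s : Set ℝ} (hs : MeasurableSet s)
    {ε : ℝ≥0∞} (hε : ε ≠ 0) :
    ∃ g : ℝ → ℝ, eLpNorm (g - s.indicator fun _ => c) 1 μ0 ≤ ε ∧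
      ∃ K : ℝ≥0, LipschitzWith K g := by
  classical
  set s' := s ∩ Set.Icc (0:ℝ) 1 with hs'def
  have hs'm : MeasurableSet s' := hs.inter measurableSet_Icc
  have hs'fin : volume s' ≠ ∞ := by
    refine ((measure_mono (Set.inter_subset_right)).trans_lt ?_).ne
    rw [Real.volume_Icc]
    exact ENNReal.ofReal_lt_top
  set M : ℝ≥0∞ := 2 * (‖c‖₊ : ℝ≥0∞) + 1 with hMdef
  have hM0 : M ≠ 0 := by simp [hMdef]
  have hMtop : M ≠ ∞ :=
    ENNReal.add_ne_top.mpr ⟨ENNReal.mul_ne_top (by norm_num) ENNReal.coe_ne_top,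
      ENNReal.one_ne_top⟩
  set η : ℝ≥0∞ := ε / M with hηdef
  have hη0 : η ≠ 0 := by
    rw [hηdef]
    simp [ENNReal.div_eq_zero_iff, hε, hMtop]
  have hη2 : η / 2 ≠ 0 := by
    simp [ENNReal.div_eq_zero_iff, hη0]
  have hMη : M * η ≤ ε := ENNReal.mul_div_le
  obtain ⟨U, hsU, hUo, hUfin, hUd⟩ := hs'm.exists_isOpen_diff_lt hs'fin hη2
  obtain ⟨Kc, hKs, hKcomp, hKd⟩ := hs'm.exists_isCompact_diff_lt hs'fin hη2
  have hUK : volume (U \ Kc) < η := by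
    have hsub : U \ Kc ⊆ (U \ s') ∪ (s' \ Kc) := by
      intro x hx
      by_cases hxs : x ∈ s'
      · exact Or.inr ⟨hxs, hx.2⟩
      · exact Or.inl ⟨hx.1, hxs⟩
    calc volume (U \ Kc) ≤ volume ((U \ s') ∪ (s' \ Kc)) := measure_mono hsub
      _ ≤ volume (U \ s') + volume (s' \ Kc) := measure_union_le _ _
      _ < η / 2 + η / 2 := ENNReal.add_lt_add hUd hKd
      _ = η := ENNReal.add_halves η
  have hμ0UK : μ0 (U \ Kc) < η := lt_of_le_of_lt (Measure.restrict_le_self _) hUK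
  rcases Kc.eq_empty_or_nonempty with hKemp | hKne
  · -- the compact set is empty: take `g = 0`
    refine ⟨fun _ => 0, ?_, 0, LipschitzWith.const' 0⟩
    have h1 : ((fun _ : ℝ => (0:ℝ)) - s.indicator fun _ => c) = -(s.indicator fun _ => c) := by
      funext x; simp
    rw [h1, eLpNorm_neg, eLpNorm_indicator_const hs one_ne_zero ENNReal.one_ne_top]
    have hμ0s : μ0 s < η := by
      have : μ0 s = volume s' := by rw [μ0_def, Measure.restrict_apply hs]
      rw [this]
      calc volume s' = volume (s' \ Kc) := by rw [hKemp, Set.diff_empty]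
        _ < η / 2 := hKd
        _ ≤ η := ENNReal.half_le_self
    calc (‖c‖₊ : ℝ≥0∞) * μ0 s ^ (1 / (1:ℝ≥0∞).toReal)
        = (‖c‖₊ : ℝ≥0∞) * μ0 s := by norm_num
      _ ≤ M * η := by
          refine mul_le_mul' ?_ hμ0s.le
          rw [hMdef]
          calc (‖c‖₊ : ℝ≥0∞) ≤ 2 * ‖c‖₊ := by
                nth_rewrite 1 [← one_mul (‖c‖₊ : ℝ≥0∞)]
                exact mul_le_mul' one_le_two le_rfl
            _ ≤ 2 * ‖c‖₊ + 1 := le_self_add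
      _ ≤ ε := hMη
  · -- the compact set is nonempty
    obtain ⟨δ, hδ0, hδU⟩ := hKcomp.exists_thickening_subset_open hUo (hKs.trans hsU)
    set g : ℝ → ℝ := fun x => c * max 0 (1 - infDist x Kc / δ) with hgdef
    have hmax_le_one : ∀ x : ℝ, max 0 (1 - infDist x Kc / δ) ≤ 1 := by
      intro x
      refine max_le zero_le_one ?_
      have h1 : 0 ≤ infDist x Kc / δ := div_nonneg infDist_nonneg hδ0.le
      linarith
    have hgK : ∀ x ∈ Kc, g x = c := by
      intro x hx
      rw [hgdef]
      simp [infDist_zero_of_mem hx]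
    have hgU : ∀ x, x ∉ U → g x = 0 := by
      intro x hxU
      have hxth : x ∉ thickening δ Kc := fun hmem => hxU (hδU hmem)
      rw [mem_thickening_iff_infDist_lt hKne, not_lt] at hxth
      have h1 : 1 - infDist x Kc / δ ≤ 0 := by
        have := (one_le_div hδ0).mpr hxth
        linarith
      rw [hgdef]
      simp [max_eq_left h1]
    refine ⟨g, ?_, ‖c‖₊ * (Real.toNNReal δ)⁻¹, ?_⟩
    · -- eLpNorm bound
      have hbd : ∀ᵐ x ∂μ0, ‖(g - s.indicator fun _ => c) x‖
          ≤ ‖(U \ Kc).indicator (fun _ => 2 * |c|) x‖ := by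
        have hmem : ∀ᵐ x ∂μ0, x ∈ Set.Icc (0:ℝ) 1 := by
          rw [μ0_def]; exact ae_restrict_mem measurableSet_Icc
        refine hmem.mono fun x hxI => ?_
        by_cases hxK : x ∈ Kc
        · have hxs : x ∈ s := ((hKs hxK).1 : x ∈ s)
          simp [hgK x hxK, Set.indicator_of_mem hxs]
        · by_cases hxU : x ∈ U
          · have hxUK : x ∈ U \ Kc := ⟨hxU, hxK⟩
            rw [Set.indicator_of_mem hxUK]
            have h1 : |g x| ≤ |c| := by
              rw [hgdef, abs_mul]
              have h2 : |max 0 (1 - infDist x Kc / δ)| ≤ 1 := by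
                rw [abs_of_nonneg (le_max_left _ _)]
                exact hmax_le_one x
              calc |c| * |max 0 (1 - infDist x Kc / δ)| ≤ |c| * 1 :=
                    mul_le_mul_of_nonneg_left h2 (abs_nonneg c)
                _ = |c| := mul_one _
            have h2 : |s.indicator (fun _ => c) x| ≤ |c| := by
              by_cases hxs : x ∈ s <;> simp [hxs, abs_nonneg]
            calc ‖(g - s.indicator fun _ => c) x‖
                = |g x - s.indicator (fun _ => c) x| := rfl
              _ ≤ |g x| + |s.indicator (fun _ => c) x| := abs_sub _ _
              _ ≤ |c| + |c| := add_le_add h1 h2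
              _ = 2 * |c| := by ring
              _ ≤ ‖(2 * |c| : ℝ)‖ := le_abs_self _
          · have hxs : x ∉ s := by
              intro hxs
              exact hxU (hsU ⟨hxs, hxI⟩)
            have hxUK : x ∉ U \ Kc := fun hx => hxU hx.1
            simp [hgU x hxU, Set.indicator_of_notMem hxs, Set.indicator_of_notMem hxUK]
      calc eLpNorm (g - s.indicator fun _ => c) 1 μ0
          ≤ eLpNorm ((U \ Kc).indicator (fun _ => (2 * |c| : ℝ))) 1 μ0 := eLpNorm_mono_ae hbd
        _ = (‖(2 * |c| : ℝ)‖₊ : ℝ≥0∞) * μ0 (U \ Kc) ^ (1 / (1:ℝ≥0∞).toReal) :=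
            eLpNorm_indicator_const (hUo.measurableSet.diff hKcomp.measurableSet)
              one_ne_zero ENNReal.one_ne_top
        _ ≤ M * η := by
            refine mul_le_mul' ?_ ?_
            · rw [hMdef]
              have : ‖(2 * |c| : ℝ)‖₊ = 2 * ‖c‖₊ := by
                rw [nnnorm_mul]
                congr 1
                · simp
                · exact Real.nnnorm_abs c
              rw [this]
              push_cast
              exact le_self_add
            · norm_num
              exact hμ0UK.le
        _ ≤ ε := hMη
    · -- Lipschitz
      apply LipschitzWith.of_dist_le_mul
      intro x y
      have hinf := (lipschitz_infDist_pt Kc).dist_le_mul x y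
      rw [Real.dist_eq] at hinf
      rw [Real.dist_eq, Real.dist_eq]
      have e1 : g x - g y
          = c * (max 0 (1 - infDist x Kc / δ) - max 0 (1 - infDist y Kc / δ)) := by
        rw [hgdef]; ring
      have e2 : |max 0 (1 - infDist x Kc / δ) - max 0 (1 - infDist y Kc / δ)|
          ≤ |infDist x Kc - infDist y Kc| / δ := by
        rw [max_comm 0 _, max_comm 0 _]
        refine (abs_max_sub_max_le_abs _ _ _).trans ?_
        have h : (1 - infDist x Kc / δ) - (1 - infDist y Kc / δ)
            = -((infDist x Kc - infDist y Kc) / δ) := by ring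
        rw [h, abs_neg, abs_div, abs_of_pos hδ0]
      have hcoe : ((‖c‖₊ * (Real.toNNReal δ)⁻¹ : ℝ≥0) : ℝ) = |c| / δ := by
        push_cast [Real.coe_toNNReal δ hδ0.le]
        rw [Real.norm_eq_abs]
        ring
      rw [e1, abs_mul, hcoe]
      calc |c| * |max 0 (1 - infDist x Kc / δ) - max 0 (1 - infDist y Kc / δ)|
          ≤ |c| * (|infDist x Kc - infDist y Kc| / δ) :=
            mul_le_mul_of_nonneg_left e2 (abs_nonneg c)
        _ ≤ |c| * (|x - y| / δ) := by
            have h3 : |infDist x Kc - infDist y Kc| ≤ |x - y| := by simpa [Real.dist_eq] using hinf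
            gcongr
        _ = |c| / δ * |x - y| := by ring


lemma approx (h : Lp ℝ 1 μ0) {ε : ℝ} (hε : 0 < ε) :
    ∃ (g : ℝ → ℝ) (K : ℝ≥0) (G : Lp ℝ 1 μ0), LipschitzWith K g ∧
      (G : ℝ → ℝ) =ᵐ[μ0] g ∧ ‖h - G‖ ≤ ε := by
  have hmem : MemLp (h : ℝ → ℝ) 1 μ0 := Lp.memLp h
  obtain ⟨g, hg, ⟨K, hK⟩⟩ := hmem.induction_dense ENNReal.one_ne_top
    (fun g : ℝ → ℝ => ∃ K : ℝ≥0, LipschitzWith K g)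
    (fun c s hs hμs ε' hε' => indicator_approx c hs hε')
    (fun f g hf hg => by
      obtain ⟨Kf, hf⟩ := hf
      obtain ⟨Kg, hg⟩ := hg
      exact ⟨Kf + Kg, hf.add hg⟩)
    (fun f hf => by
      obtain ⟨Kf, hf⟩ := hf
      exact hf.continuous.aestronglyMeasurable)
    (ENNReal.ofReal_pos.mpr hε).ne'
  have hgc : Continuous g := hK.continuous
  have hmemg : MemLp g 1 μ0 := memLp_one_iff_integrable.mpr (integrable_of_continuous hgc)
  refine ⟨g, K, hmemg.toLp g, hK, MemLp.coeFn_toLp hmemg, ?_⟩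
  rw [Lp.norm_def]
  have hsub : ((h - hmemg.toLp g : Lp ℝ 1 μ0) : ℝ → ℝ) =ᵐ[μ0] (h : ℝ → ℝ) - g := by
    filter_upwards [Lp.coeFn_sub h (hmemg.toLp g), MemLp.coeFn_toLp hmemg] with x hx1 hx2
    simp only [hx1, Pi.sub_apply, hx2]
  rw [eLpNorm_congr_ae hsub]
  exact ENNReal.toReal_le_of_le_ofReal hε.le hg


section Op
variable (P : Lp ℝ 1 μ0 →L[ℝ] Lp ℝ 1 μ0)
    (hP : ∀ f : Lp ℝ 1 μ0, ∀ᵐ x ∂μ0,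
      (P f : ℝ → ℝ) x = (1/2) * (f : ℝ → ℝ) (x / 2) + (1/2) * (f : ℝ → ℝ) (1 - x / 2))

include hP

lemma part1' (f : Lp ℝ 1 μ0) {A : Set ℝ} (hA : MeasurableSet A) :
    ∫ x in A, (P f : ℝ → ℝ) x ∂μ0 = ∫ x in ψ ⁻¹' A, (f : ℝ → ℝ) x ∂μ0 := by
  have hfi : Integrable (f : ℝ → ℝ) μ0 := L1.integrable_coeFn f
  have h1 : ∫ x in A, (P f : ℝ → ℝ) x ∂μ0
      = ∫ x in A, ((1/2) * (f : ℝ → ℝ) (x/2) + (1/2) * (f : ℝ → ℝ) (1 - x/2)) ∂μ0 :=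
    setIntegral_congr_ae hA ((hP f).mono fun x hx _ => hx)
  rw [h1, core hfi hA]

lemma markov : ∀ h : Lp ℝ 1 μ0, ‖P h‖ ≤ ‖h‖ := by
  intro h
  have hfi : Integrable ((h : Lp ℝ 1 μ0) : ℝ → ℝ) μ0 := L1.integrable_coeFn h
  have habs : Integrable (fun x => |(h : ℝ → ℝ) x|) μ0 := hfi.abs
  have hb1 : Integrable
      (fun x => (1/2) * |(h : ℝ → ℝ) (x/2)| + (1/2) * |(h : ℝ → ℝ) (1 - x/2)|) μ0 :=
    ((integrable_comp_T1 habs).const_mul _).add ((integrable_comp_T2 habs).const_mul _)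
  have hcore := core habs MeasurableSet.univ
  rw [Set.preimage_univ, Measure.restrict_univ] at hcore
  calc ‖P h‖ = ∫ x, ‖(P h : ℝ → ℝ) x‖ ∂μ0 := L1.norm_eq_integral_norm (P h)
    _ ≤ ∫ x, ((1/2) * |(h : ℝ → ℝ) (x/2)| + (1/2) * |(h : ℝ → ℝ) (1 - x/2)|) ∂μ0 := by
        refine integral_mono_ae (L1.integrable_coeFn (P h)).norm hb1 ?_
        refine (hP h).mono fun x hx => ?_
        show ‖(P h : ℝ → ℝ) x‖ ≤ _
        rw [Real.norm_eq_abs, hx]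
        refine (abs_add_le _ _).trans ?_
        rw [abs_mul, abs_mul, abs_of_pos (by norm_num : (0:ℝ) < 1/2)]
    _ = ∫ x, |(h : ℝ → ℝ) x| ∂μ0 := hcore
    _ = ∫ x, ‖(h : ℝ → ℝ) x‖ ∂μ0 := by simp [Real.norm_eq_abs]
    _ = ‖h‖ := (L1.norm_eq_integral_norm h).symm

lemma part2' (fstar : Lp ℝ 1 μ0) (hfstar : (fstar : ℝ → ℝ) =ᵐ[μ0] fun _ => (1:ℝ)) :
    P fstar = fstar := by
  apply Lp.ext (p := (1 : ℝ≥0∞)) (μ := μ0)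

  have h1 : Integrable (fun _ : ℝ => (1:ℝ)) μ0 := integrable_const _
  apply ae_eq_of_forall_setIntegral_eq_of_sigmaFinite
  · exact fun s hs hμs => (L1.integrable_coeFn (P fstar)).integrableOn
  · exact fun s hs hμs => (L1.integrable_coeFn fstar).integrableOn
  · intro s hs hμs
    have e1 := part1' P hP fstar hs
    have e2 : ∫ x in ψ ⁻¹' s, (fstar : ℝ → ℝ) x ∂μ0 = ∫ x in ψ ⁻¹' s, (1:ℝ) ∂μ0 :=
      setIntegral_congr_ae (hs.preimage ψ_meas) (hfstar.mono fun x hx _ => hx)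
    have e3 : ∫ x in s, (1:ℝ) ∂μ0 = ∫ x in ψ ⁻¹' s, (1:ℝ) ∂μ0 := by
      have := core h1 hs
      norm_num at this
      simpa using this
    have e4 : ∫ x in s, (fstar : ℝ → ℝ) x ∂μ0 = ∫ x in s, (1:ℝ) ∂μ0 :=
      setIntegral_congr_ae hs (hfstar.mono fun x hx _ => hx)
    rw [e1, e2, ← e3, e4]


lemma step {g : ℝ → ℝ} (hgc : Continuous g) (h : Lp ℝ 1 μ0)
    (hhg : (h : ℝ → ℝ) =ᵐ[μ0] g) : ((P h : Lp ℝ 1 μ0) : ℝ → ℝ) =ᵐ[μ0] Qop g := by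
  have hgint : Integrable g μ0 := integrable_of_continuous hgc
  have hQint : Integrable (Qop g) μ0 := integrable_of_continuous (continuous_Qop hgc)
  apply ae_eq_of_forall_setIntegral_eq_of_sigmaFinite
  · exact fun s hs hμs => (L1.integrable_coeFn (P h)).integrableOn
  · exact fun s hs hμs => hQint.integrableOn
  · intro s hs hμs
    have e1 := part1' P hP h hs
    have e2 : ∫ x in ψ ⁻¹' s, (h : ℝ → ℝ) x ∂μ0 = ∫ x in ψ ⁻¹' s, g x ∂μ0 :=
      setIntegral_congr_ae (hs.preimage ψ_meas) (hhg.mono fun x hx _ => hx)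
    have e3 := core hgint hs
    rw [e1, e2, ← e3]
    rfl

lemma iterate {g : ℝ → ℝ} {K : ℝ≥0} (hg : LipschitzWith K g) (h : Lp ℝ 1 μ0)
    (hhg : (h : ℝ → ℝ) =ᵐ[μ0] g) : ∀ n : ℕ,
    (((P ^ n) h : Lp ℝ 1 μ0) : ℝ → ℝ) =ᵐ[μ0] Qop^[n] g ∧
      LipschitzWith (K / 2 ^ n) (Qop^[n] g) ∧
      ∫ x, Qop^[n] g x ∂μ0 = ∫ x, g x ∂μ0 := by
  intro n
  induction n with
  | zero =>
    refine ⟨by simpa using hhg, by simpa using hg, rfl⟩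
  | succ n ih =>
    obtain ⟨ih1, ih2, ih3⟩ := ih
    have hic : Continuous (Qop^[n] g) := ih2.continuous
    have hpow : (P ^ (n+1)) h = P ((P ^ n) h) := by
      rw [pow_succ']; rfl
    refine ⟨?_, ?_, ?_⟩
    · rw [hpow, Function.iterate_succ_apply']
      exact step P hP hic ((P ^ n) h) ih1
    · rw [Function.iterate_succ_apply']
      have := Qop_lipschitz ih2
      rwa [div_div, ← pow_succ] at this
    · rw [Function.iterate_succ_apply', integral_Qop (integrable_of_continuous hic), ih3]

lemma lip_converge (fstar : Lp ℝ 1 μ0) (hfstar : (fstar : ℝ → ℝ) =ᵐ[μ0] fun _ => (1:ℝ))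
    {g : ℝ → ℝ} {K : ℝ≥0} (hg : LipschitzWith K g) (h : Lp ℝ 1 μ0)
    (hhg : (h : ℝ → ℝ) =ᵐ[μ0] g) (n : ℕ) :
    ‖(P ^ n) h - (∫ x, g x ∂μ0) • fstar‖ ≤ (K:ℝ) / 2 ^ n := by
  obtain ⟨h1, h2, h3⟩ := iterate P hP hg h hhg n
  set c := ∫ x, g x ∂μ0 with hc
  apply norm_le_of_ae_bound' (by positivity)
  have hsub : (((P ^ n) h - c • fstar : Lp ℝ 1 μ0) : ℝ → ℝ)
      =ᵐ[μ0] fun x => ((P ^ n) h : ℝ → ℝ) x - c * (fstar : ℝ → ℝ) x := by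
    filter_upwards [Lp.coeFn_sub ((P ^ n) h) (c • fstar), Lp.coeFn_smul c fstar]
      with x hx1 hx2
    rw [hx1]
    simp [hx2]
  have hmem : ∀ᵐ y ∂μ0, y ∈ Set.Icc (0:ℝ) 1 := by
    rw [μ0_def]; exact ae_restrict_mem measurableSet_Icc
  filter_upwards [hsub, h1, hfstar, hmem] with x hx1 hx2 hx3 hx4
  rw [hx1, hx2, hx3]
  have hb := lip_dist_mean h2 hx4
  rw [h3] at hb
  have hcoe : ((K / 2 ^ n : ℝ≥0) : ℝ) = (K:ℝ) / 2 ^ n := by push_cast; ring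
  rw [Real.norm_eq_abs]
  calc |Qop^[n] g x - c * 1| = |Qop^[n] g x - c| := by rw [mul_one]
    _ ≤ ((K / 2 ^ n : ℝ≥0) : ℝ) := hb
    _ = (K:ℝ) / 2 ^ n := hcoe


lemma markov_pow (n : ℕ) (u : Lp ℝ 1 μ0) : ‖(P ^ n) u‖ ≤ ‖u‖ := by
  induction n generalizing u with
  | zero => simp
  | succ n ih =>
    rw [pow_succ, ContinuousLinearMap.mul_apply]
    exact (ih (P u)).trans (markov P hP u)


lemma main (φ : ℝ → ℝ) (hφ : ∀ x : ℝ, φ x = if x ≤ 1/2 then 2 * x else 2 - 2 * x)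
    (fstar : Lp ℝ 1 μ0) (hfstar : (fstar : ℝ → ℝ) =ᵐ[μ0] fun _ => (1:ℝ)) :
    (∀ f : Lp ℝ 1 μ0, ∀ A : Set ℝ, MeasurableSet A →
      ∫ x in A, (P f : ℝ → ℝ) x ∂μ0 = ∫ x in φ ⁻¹' A, (f : ℝ → ℝ) x ∂μ0) ∧
    P fstar = fstar ∧
    (∀ f : Lp ℝ 1 μ0, IsDensity μ0 f →
      Tendsto (fun n : ℕ => ‖(P ^ n) f - fstar‖) atTop (nhds 0)) := by
  have hφψ : φ = ψ := funext fun x => hφ x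
  subst hφψ
  refine ⟨fun f A hA => part1' P hP f hA, part2' P hP fstar hfstar, ?_⟩
  rintro f ⟨hf0, hfnorm⟩
  have hf0' : ∀ᵐ x ∂μ0, 0 ≤ (f : ℝ → ℝ) x := (Lp.coeFn_nonneg f).mpr hf0
  have hfint : ∫ x, (f : ℝ → ℝ) x ∂μ0 = 1 := by
    have h1 : ‖f‖ = ∫ x, ‖(f : ℝ → ℝ) x‖ ∂μ0 := L1.norm_eq_integral_norm f
    have h2 : ∫ x, (f : ℝ → ℝ) x ∂μ0 = ∫ x, ‖(f : ℝ → ℝ) x‖ ∂μ0 :=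
      integral_congr_ae (hf0'.mono fun x hx => (Real.norm_of_nonneg hx).symm)
    rw [h2, ← h1, hfnorm]
  have hfsnorm : ‖fstar‖ = 1 := by
    rw [L1.norm_eq_integral_norm]
    have h2 : ∫ x, ‖(fstar : ℝ → ℝ) x‖ ∂μ0 = ∫ x, (1:ℝ) ∂μ0 :=
      integral_congr_ae (hfstar.mono fun x hx => by simp [hx])
    rw [h2]
    simp
  rw [Metric.tendsto_atTop]
  intro ε hε
  obtain ⟨g, K, G, hLip, hGg, hclose⟩ := approx f (by positivity : (0:ℝ) < ε/4)
  set c := ∫ x, g x ∂μ0 with hc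
  have hGint : ∫ x, (G : ℝ → ℝ) x ∂μ0 = c := integral_congr_ae hGg
  have hc1 : |c - 1| ≤ ε/4 := by
    have h1 : c - 1 = ∫ x, (((G - f : Lp ℝ 1 μ0)) : ℝ → ℝ) x ∂μ0 := by
      have h2 : ∫ x, (((G - f : Lp ℝ 1 μ0)) : ℝ → ℝ) x ∂μ0
          = ∫ x, ((G : ℝ → ℝ) x - (f : ℝ → ℝ) x) ∂μ0 :=
        integral_congr_ae ((Lp.coeFn_sub G f).mono fun x hx => by simpa using hx)
      rw [h2, integral_sub (L1.integrable_coeFn G) (L1.integrable_coeFn f), hGint, hfint]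
    calc |c - 1| = ‖∫ x, (((G - f : Lp ℝ 1 μ0)) : ℝ → ℝ) x ∂μ0‖ := by
          rw [← h1, Real.norm_eq_abs]
      _ ≤ ∫ x, ‖(((G - f : Lp ℝ 1 μ0)) : ℝ → ℝ) x‖ ∂μ0 := norm_integral_le_integral_norm _
      _ = ‖G - f‖ := (L1.norm_eq_integral_norm _).symm
      _ = ‖f - G‖ := norm_sub_rev _ _
      _ ≤ ε/4 := hclose
  have htend : Tendsto (fun n : ℕ => (K:ℝ) / 2 ^ n) atTop (nhds 0) := by
    have h := tendsto_pow_atTop_nhds_zero_of_lt_one (by norm_num : (0:ℝ) ≤ 1/2)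
      (by norm_num : (1/2:ℝ) < 1)
    have h2 := h.const_mul (K:ℝ)
    simp only [mul_zero] at h2
    have he : (fun n : ℕ => (K:ℝ)/2^n) = fun n : ℕ => (K:ℝ)*(1/2)^n := by
      funext n
      rw [div_pow, one_pow]
      ring
    rw [he]
    exact h2
  obtain ⟨N, hN⟩ := eventually_atTop.mp (htend.eventually (gt_mem_nhds (by positivity : (0:ℝ) < ε/4)))
  refine ⟨N, fun n hn => ?_⟩
  have key := lip_converge P hP fstar hfstar hLip G hGg n
  have h1 : ‖(P ^ n) f - (P ^ n) G‖ ≤ ε/4 := by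
    rw [← map_sub]
    exact (markov_pow P hP n (f - G)).trans hclose
  have h3 : ‖c • fstar - fstar‖ ≤ ε/4 := by
    have he : c • fstar - fstar = (c - 1) • fstar := by rw [sub_smul, one_smul]
    rw [he, norm_smul, hfsnorm, mul_one, Real.norm_eq_abs]
    exact hc1
  have hdecomp : (P ^ n) f - fstar
      = ((P ^ n) f - (P ^ n) G) + (((P ^ n) G - c • fstar) + (c • fstar - fstar)) := by
    abel
  have hbound : ‖(P ^ n) f - fstar‖ ≤ ε/4 + ((K:ℝ)/2^n + ε/4) := by
    rw [hdecomp]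
    refine (norm_add_le _ _).trans ?_
    refine add_le_add h1 ?_
    refine (norm_add_le _ _).trans ?_
    exact add_le_add key h3
  have hfin : (K:ℝ)/2^n < ε/4 := hN n hn
  rw [Real.dist_0_eq_abs, abs_of_nonneg (norm_nonneg _)]
  calc ‖(P ^ n) f - fstar‖ ≤ ε/4 + ((K:ℝ)/2^n + ε/4) := hbound
    _ < ε/4 + (ε/4 + ε/4) := by linarith
    _ < ε := by linarith


end Op
end
end TentAux

/-- **Exactness of the tent map via its Frobenius–Perron operator.**
Let `φ` be the tent map on `[0,1]`, `ℓ` Lebesgue measure on `[0,1]`, and let `P` be the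
operator `Pf(x) = (1/2)f(x/2) + (1/2)f(1 − x/2)` on `L¹([0,1])`.  Then `P` is the
Frobenius–Perron operator of `φ`, i.e. `∫_A Pf dℓ = ∫_{φ⁻¹(A)} f dℓ` for every Borel `A`;
the constant density `f* = 1_{[0,1]}` is invariant, `Pf* = f*`; and `‖Pⁿf − f*‖₁ → 0` for
every density `f`. -/
theorem tent_map_frobenius_perron_asymptotic_stability
    (μ : Measure ℝ) (hμ : μ = volume.restrict (Set.Icc (0:ℝ) 1))
    (φ : ℝ → ℝ) (hφ : ∀ x : ℝ, φ x = if x ≤ 1/2 then 2 * x else 2 - 2 * x)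
    (P : Lp ℝ 1 μ →L[ℝ] Lp ℝ 1 μ)
    (hP : ∀ f : Lp ℝ 1 μ, ∀ᵐ x ∂μ,
      (P f : ℝ → ℝ) x = (1/2) * (f : ℝ → ℝ) (x / 2) + (1/2) * (f : ℝ → ℝ) (1 - x / 2))
    (fstar : Lp ℝ 1 μ) (hfstar : (fstar : ℝ → ℝ) =ᵐ[μ] fun _ => (1:ℝ)) :
    (∀ f : Lp ℝ 1 μ, ∀ A : Set ℝ, MeasurableSet A →
      ∫ x in A, (P f : ℝ → ℝ) x ∂μ = ∫ x in φ ⁻¹' A, (f : ℝ → ℝ) x ∂μ) ∧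
    P fstar = fstar ∧
    (∀ f : Lp ℝ 1 μ, IsDensity μ f →
      Tendsto (fun n : ℕ => ‖(P ^ n) f - fstar‖) atTop (nhds 0)) := by
  subst hμ
  exact main P hP φ hφ fstar hfstar
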